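/- For the single-coordinate case: let h, h' ∈ ℕ^q differ by h'_j = h_j + 1 and h'_k = h_k for k≠j, and let r ∈ ℕ^q have independent coordinates with Pr[r_j=k] = (1−e^{−ε/2})e^{−εk/2}. Then for every j* ∈ [q], Pr[Med(h+r) = j*] ≤ e^{ε/2}·Pr[Med(h'+r) = j*] and Pr[Med(h'+r) = j*] ≤ e^{ε/2}·Pr[Med(h+r) = j*]. -/
import Mathlib


open Finset

/-- `Med z` is the minimum `k` with `Σ_{i≤k} z_i ≥ Σ_{i>k} z_i` (the set of such `k`
is always nonempty since `k` maximal works). -/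
def Med {q : ℕ} (z : Fin (q + 1) → ℕ) : Fin (q + 1) :=
  if h : (univ.filter (fun k : Fin (q + 1) =>
      ∑ i ∈ univ.filter (fun i => i ≤ k), z i ≥ ∑ i ∈ univ.filter (fun i => k < i), z i)).Nonempty
  then (univ.filter (fun k : Fin (q + 1) =>
      ∑ i ∈ univ.filter (fun i => i ≤ k), z i ≥ ∑ i ∈ univ.filter (fun i => k < i), z i)).min' h
  else 0

/-- Histogram of reported types. -/
def hist {n q : ℕ} (θ : Fin n → Fin (q + 1)) : Fin (q + 1) → ℕ :=
  fun j => (univ.filter (fun i => θ i = j)).card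

/-- Geometric-type noise pmf on ℕ: `Pr[r=k] = (1−e^{−ε/2})·e^{−εk/2}`. -/
noncomputable def geoPMF (ε : ℝ) (k : ℕ) : ℝ :=
  (1 - Real.exp (-ε / 2)) * Real.exp (-ε * k / 2)

/-- Product pmf of independent geometric noises. -/
noncomputable def noisePMF {q : ℕ} (ε : ℝ) (r : Fin (q + 1) → ℕ) : ℝ :=
  ∏ j, geoPMF ε (r j)

/-! ### Auxiliary lemmas about `Med` -/

lemma medSet_nonempty {q : ℕ} (z : Fin (q + 1) → ℕ) :
    (univ.filter (fun k : Fin (q + 1) =>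
      ∑ i ∈ univ.filter (fun i => i ≤ k), z i ≥ ∑ i ∈ univ.filter (fun i => k < i), z i)).Nonempty := by
  refine ⟨Fin.last q, ?_⟩
  simp only [mem_filter, mem_univ, true_and, ge_iff_le]
  have : (univ.filter (fun i : Fin (q + 1) => Fin.last q < i)) = ∅ := by
    ext i; simp [not_lt.mpr (Fin.le_last i)]
  rw [this]
  simp

lemma med_eq_iff {q : ℕ} (z : Fin (q + 1) → ℕ) (j : Fin (q + 1)) :
    Med z = j ↔
      ((∑ i ∈ univ.filter (fun i => j < i), z i ≤ ∑ i ∈ univ.filter (fun i => i ≤ j), z i) ∧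
        ∀ k < j, ¬ (∑ i ∈ univ.filter (fun i => k < i), z i ≤ ∑ i ∈ univ.filter (fun i => i ≤ k), z i)) := by
  rw [Med, dif_pos (medSet_nonempty z)]
  set S := (univ.filter (fun k : Fin (q + 1) =>
      ∑ i ∈ univ.filter (fun i => i ≤ k), z i ≥ ∑ i ∈ univ.filter (fun i => k < i), z i)) with hS
  constructor
  · rintro rfl
    refine ⟨?_, fun k hk hkmem => ?_⟩
    · have := S.min'_mem (medSet_nonempty z)
      simpa [hS, mem_filter] using this
    · have : S.min' _ ≤ k := S.min'_le k (by simp [hS, mem_filter, hkmem])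
      exact absurd hk (not_lt.mpr this)
  · rintro ⟨h1, h2⟩
    have hjS : j ∈ S := by simp [hS, mem_filter]; exact h1
    refine le_antisymm (S.min'_le j hjS) ?_
    by_contra hlt
    push_neg at hlt
    have hmem := S.min'_mem (medSet_nonempty z)
    simp only [hS, mem_filter, mem_univ, true_and, ge_iff_le] at hmem
    exact h2 _ hlt hmem

lemma sum_ind_le {q : ℕ} (j k : Fin (q + 1)) :
    (∑ i ∈ univ.filter (fun i : Fin (q + 1) => i ≤ k), (if i = j then 1 else 0 : ℕ))
      = if j ≤ k then 1 else 0 := by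
  rw [Finset.sum_ite_eq' _ j (fun _ => (1 : ℕ))]; simp [mem_filter]

lemma sum_ind_gt {q : ℕ} (j k : Fin (q + 1)) :
    (∑ i ∈ univ.filter (fun i : Fin (q + 1) => k < i), (if i = j then 1 else 0 : ℕ))
      = if k < j then 1 else 0 := by
  rw [Finset.sum_ite_eq' _ j (fun _ => (1 : ℕ))]; simp [mem_filter]

lemma sum2_le {q : ℕ} (z : Fin (q + 1) → ℕ) (j jstar k : Fin (q + 1)) :
    (∑ i ∈ univ.filter (fun i : Fin (q + 1) => i ≤ k),
        (z i + ((if i = j then 1 else 0) + (if i = jstar then 1 else 0))))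
      = (∑ i ∈ univ.filter (fun i : Fin (q + 1) => i ≤ k), z i)
        + ((if j ≤ k then 1 else 0) + (if jstar ≤ k then 1 else 0)) := by
  rw [Finset.sum_add_distrib, Finset.sum_add_distrib, sum_ind_le, sum_ind_le]

lemma sum2_gt {q : ℕ} (z : Fin (q + 1) → ℕ) (j jstar k : Fin (q + 1)) :
    (∑ i ∈ univ.filter (fun i : Fin (q + 1) => k < i),
        (z i + ((if i = j then 1 else 0) + (if i = jstar then 1 else 0))))
      = (∑ i ∈ univ.filter (fun i : Fin (q + 1) => k < i), z i)
        + ((if k < j then 1 else 0) + (if k < jstar then 1 else 0)) := by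
  rw [Finset.sum_add_distrib, Finset.sum_add_distrib, sum_ind_gt, sum_ind_gt]

lemma sum1_le {q : ℕ} (z : Fin (q + 1) → ℕ) (j k : Fin (q + 1)) :
    (∑ i ∈ univ.filter (fun i : Fin (q + 1) => i ≤ k), (z i + if i = j then 1 else 0))
      = (∑ i ∈ univ.filter (fun i : Fin (q + 1) => i ≤ k), z i) + if j ≤ k then 1 else 0 := by
  rw [Finset.sum_add_distrib, sum_ind_le]

lemma sum1_gt {q : ℕ} (z : Fin (q + 1) → ℕ) (j k : Fin (q + 1)) :
    (∑ i ∈ univ.filter (fun i : Fin (q + 1) => k < i), (z i + if i = j then 1 else 0))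
      = (∑ i ∈ univ.filter (fun i : Fin (q + 1) => k < i), z i) + if k < j then 1 else 0 := by
  rw [Finset.sum_add_distrib, sum_ind_gt]

lemma update_add_eq {q : ℕ} (h r : Fin (q + 1) → ℕ) (j jstar : Fin (q + 1)) :
    (fun k => Function.update h j (h j + 1) k + Function.update r jstar (r jstar + 1) k)
      = fun k => (h k + r k) + ((if k = j then 1 else 0) + (if k = jstar then 1 else 0)) := by
  funext k
  rcases eq_or_ne k j with rfl | hkj <;> rcases eq_or_ne k jstar with rfl | hks <;>
    simp [Function.update_apply, *] <;> omega

lemma update_add_eq' {q : ℕ} (h r : Fin (q + 1) → ℕ) (j : Fin (q + 1)) :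
    (fun k => Function.update h j (h j + 1) k + r k)
      = fun k => (h k + r k) + (if k = j then 1 else 0) := by
  funext k
  rcases eq_or_ne k j with rfl | hkj <;> simp [Function.update_apply, *] <;> omega

lemma update_add_eq'' {q : ℕ} (h r : Fin (q + 1) → ℕ) (jstar : Fin (q + 1)) :
    (fun k => h k + Function.update r jstar (r jstar + 1) k)
      = fun k => (h k + r k) + (if k = jstar then 1 else 0) := by
  funext k
  rcases eq_or_ne k jstar with rfl | hks <;> simp [Function.update_apply, *] <;> omega

lemma med1 {q : ℕ} (h r : Fin (q + 1) → ℕ) (j jstar : Fin (q + 1))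
    (H : Med (fun k => h k + r k) = jstar) :
    Med (fun k => Function.update h j (h j + 1) k
        + Function.update r jstar (r jstar + 1) k) = jstar := by
  rw [update_add_eq, med_eq_iff]
  rw [med_eq_iff] at H
  obtain ⟨H1, H2⟩ := H
  constructor
  · rw [sum2_le, sum2_gt]
    simp only [lt_irrefl, le_refl, if_true, if_false]
    by_cases hj : j ≤ jstar
    · simp only [if_pos hj, if_neg (not_lt.mpr hj)]; omega
    · simp only [if_neg hj, if_pos (not_le.mp hj)]; omega
  · intro k hk
    have H2k := H2 k hk
    rw [sum2_le, sum2_gt]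
    simp only [if_pos hk, if_neg (not_le.mpr hk)]
    by_cases hj : j ≤ k
    · simp only [if_pos hj, if_neg (not_lt.mpr hj)]; omega
    · simp only [if_neg hj, if_pos (not_le.mp hj)]; omega

lemma med2 {q : ℕ} (h r : Fin (q + 1) → ℕ) (j jstar : Fin (q + 1))
    (H : Med (fun k => Function.update h j (h j + 1) k + r k) = jstar) :
    Med (fun k => h k + Function.update r jstar (r jstar + 1) k) = jstar := by
  rw [update_add_eq'] at H
  rw [update_add_eq'', med_eq_iff]
  rw [med_eq_iff] at H
  obtain ⟨H1, H2⟩ := H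
  rw [sum1_le, sum1_gt] at H1
  constructor
  · rw [sum1_le, sum1_gt]
    simp only [lt_irrefl, le_refl, if_true, if_false]
    by_cases hj : j ≤ jstar
    · simp only [if_pos hj, if_neg (not_lt.mpr hj)] at H1; omega
    · simp only [if_neg hj, if_pos (not_le.mp hj)] at H1; omega
  · intro k hk
    have H2k := H2 k hk
    rw [sum1_le, sum1_gt] at H2k
    rw [sum1_le, sum1_gt]
    simp only [if_pos hk, if_neg (not_le.mpr hk)]
    by_cases hj : j ≤ k
    · simp only [if_pos hj, if_neg (not_lt.mpr hj)] at H2k; omega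
    · simp only [if_neg hj, if_pos (not_le.mp hj)] at H2k; omega

/-! ### Auxiliary lemmas about the noise pmf -/

lemma geoPMF_nonneg {ε : ℝ} (hε : 0 < ε) (k : ℕ) : 0 ≤ geoPMF ε k := by
  unfold geoPMF
  have : Real.exp (-ε / 2) ≤ 1 := Real.exp_le_one_iff.mpr (by linarith)
  exact mul_nonneg (by linarith) (Real.exp_nonneg _)

lemma noisePMF_nonneg {q : ℕ} {ε : ℝ} (hε : 0 < ε) (r : Fin (q + 1) → ℕ) :
    0 ≤ noisePMF ε r :=
  Finset.prod_nonneg fun _ _ => geoPMF_nonneg hε _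

lemma geoPMF_eq (ε : ℝ) (k : ℕ) :
    geoPMF ε k = (1 - Real.exp (-ε / 2)) * Real.exp (-ε / 2) ^ k := by
  unfold geoPMF
  rw [← Real.exp_nat_mul]
  ring_nf

lemma geoPMF_succ (ε : ℝ) (k : ℕ) :
    geoPMF ε (k + 1) = Real.exp (-ε / 2) * geoPMF ε k := by
  rw [geoPMF_eq, geoPMF_eq, pow_succ]
  ring

lemma summable_geoPMF {ε : ℝ} (hε : 0 < ε) : Summable (geoPMF ε) := by
  have h1 : Real.exp (-ε / 2) < 1 := Real.exp_lt_one_iff.mpr (by linarith)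
  have := (summable_geometric_of_lt_one (Real.exp_nonneg _) h1).mul_left
    (1 - Real.exp (-ε / 2))
  refine this.congr fun k => ?_
  rw [geoPMF_eq]

lemma mul_summ {β : Type*} (f : ℕ → ℝ) (F : β → ℝ) (hf : Summable f) (h0 : ∀ k, 0 ≤ f k)
    (ih : Summable F) (h1 : ∀ b, 0 ≤ F b) :
    Summable (fun p : ℕ × β => f p.1 * F p.2) :=
  hf.mul_of_nonneg ih h0 h1

lemma summable_pi_prod {n : ℕ} (f : ℕ → ℝ) (hf : Summable f) (h0 : ∀ k, 0 ≤ f k) :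
    Summable (fun g : Fin n → ℕ => ∏ i, f (g i)) := by
  induction n with
  | zero =>
    exact summable_of_finite_support (Set.toFinite _)
  | succ n ih =>
    have key : Summable (fun p : ℕ × (Fin n → ℕ) => f p.1 * ∏ i, f (p.2 i)) :=
      mul_summ f (fun g : Fin n → ℕ => ∏ i, f (g i)) hf h0 ih
        (fun _ => Finset.prod_nonneg fun _ _ => h0 _)
    have hcomp : ((fun g : Fin (n + 1) → ℕ => ∏ i, f (g i)) ∘
        (Fin.consEquiv (fun _ : Fin (n + 1) => ℕ)))
        = fun p : ℕ × (Fin n → ℕ) => f p.1 * ∏ i, f (p.2 i) := by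
      funext p
      simp [Fin.consEquiv, Fin.prod_univ_succ]
    exact ((Fin.consEquiv (fun _ : Fin (n + 1) => ℕ)).summable_iff).mp
      (by rw [hcomp]; exact key)

lemma summable_noisePMF {q : ℕ} {ε : ℝ} (hε : 0 < ε) :
    Summable (noisePMF (q := q) ε) :=
  summable_pi_prod (geoPMF ε) (summable_geoPMF hε) (geoPMF_nonneg hε)

lemma noisePMF_update {q : ℕ} (ε : ℝ) (r : Fin (q + 1) → ℕ) (jstar : Fin (q + 1)) :
    noisePMF ε (Function.update r jstar (r jstar + 1))
      = Real.exp (-ε / 2) * noisePMF ε r := by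
  unfold noisePMF
  have hupd : ∀ k, geoPMF ε (Function.update r jstar (r jstar + 1) k)
      = Function.update (fun j => geoPMF ε (r j)) jstar (geoPMF ε (r jstar + 1)) k := by
    intro k
    rcases eq_or_ne k jstar with rfl | hk
    · simp
    · simp [Function.update_of_ne hk]
  rw [Finset.prod_congr rfl (fun k _ => hupd k),
    Finset.prod_update_of_mem (mem_univ jstar), geoPMF_succ,
    Finset.sdiff_singleton_eq_erase,
    ← Finset.mul_prod_erase univ (fun j => geoPMF ε (r j)) (mem_univ jstar)]
  ring

lemma update_inj {q : ℕ} (jstar : Fin (q + 1)) :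
    Function.Injective (fun r : Fin (q + 1) → ℕ =>
      Function.update r jstar (r jstar + 1)) := by
  intro a b hab
  funext k
  rcases eq_or_ne k jstar with rfl | hk
  · have := congrFun hab k
    simpa [Function.update_self] using this
  · have := congrFun hab k
    simpa [Function.update_of_ne hk] using this

/-- The key injection argument: if each noise vector `r` achieving median `j*` for
histogram `a` can be mapped (by bumping coordinate `j*` of the noise) to a noise
vector achieving median `j*` for histogram `b`, then the probabilities differ
by at most `e^{ε/2}`. -/
lemma key_ineq {q : ℕ} {ε : ℝ} (hε : 0 < ε) (a b : Fin (q + 1) → ℕ) (jstar : Fin (q + 1))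
    (hmed : ∀ r : Fin (q + 1) → ℕ, Med (fun k => a k + r k) = jstar →
      Med (fun k => b k + Function.update r jstar (r jstar + 1) k) = jstar) :
    (∑' r : Fin (q + 1) → ℕ,
        if Med (fun k => a k + r k) = jstar then noisePMF ε r else 0)
      ≤ Real.exp (ε / 2) *
        (∑' r : Fin (q + 1) → ℕ,
          if Med (fun k => b k + r k) = jstar then noisePMF ε r else 0) := by
  set f : (Fin (q + 1) → ℕ) → ℝ :=
    fun r => if Med (fun k => a k + r k) = jstar then noisePMF ε r else 0 with hf_def
  set g : (Fin (q + 1) → ℕ) → ℝ :=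
    fun r => if Med (fun k => b k + r k) = jstar then noisePMF ε r else 0 with hg_def
  have hnn : ∀ r : Fin (q + 1) → ℕ, 0 ≤ noisePMF ε r := noisePMF_nonneg hε
  have hf_nn : ∀ r, 0 ≤ f r := by
    intro r; rw [hf_def]; dsimp only; split <;> simp [hnn r]
  have hg_nn : ∀ r, 0 ≤ g r := by
    intro r; rw [hg_def]; dsimp only; split <;> simp [hnn r]
  have hf_le : ∀ r, f r ≤ noisePMF ε r := by
    intro r; rw [hf_def]; dsimp only; split <;> simp [hnn r]
  have hg_le : ∀ r, g r ≤ noisePMF ε r := by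
    intro r; rw [hg_def]; dsimp only; split <;> simp [hnn r]
  have hSf : Summable f := (summable_noisePMF hε).of_nonneg_of_le hf_nn hf_le
  have hSg : Summable g := (summable_noisePMF hε).of_nonneg_of_le hg_nn hg_le
  have hexp : (0 : ℝ) < Real.exp (ε / 2) := Real.exp_pos _
  have hSg' : Summable (fun r => Real.exp (ε / 2) * g r) := hSg.mul_left _
  have hmain : (∑' r, f r) ≤ ∑' r, Real.exp (ε / 2) * g r := by
    refine Summable.tsum_le_tsum_of_inj
      (fun r : Fin (q + 1) → ℕ => Function.update r jstar (r jstar + 1))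
      (update_inj jstar) (fun c _ => mul_nonneg hexp.le (hg_nn c)) (fun r => ?_) hSf hSg'
    by_cases hm : Med (fun k => a k + r k) = jstar
    · have hm' := hmed r hm
      have : f r = noisePMF ε r := by rw [hf_def]; simp [hm]
      rw [this]
      have : g (Function.update r jstar (r jstar + 1))
          = noisePMF ε (Function.update r jstar (r jstar + 1)) := by
        rw [hg_def]; simp only; rw [if_pos hm']
      rw [this, noisePMF_update]
      rw [← mul_assoc, ← Real.exp_add]
      have hz : ε / 2 + -ε / 2 = 0 := by ring
      rw [hz, Real.exp_zero, one_mul]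
    · have : f r = 0 := by rw [hf_def]; simp [hm]
      rw [this]
      exact mul_nonneg hexp.le (hg_nn _)
  calc (∑' r, f r) ≤ ∑' r, Real.exp (ε / 2) * g r := hmain
    _ = Real.exp (ε / 2) * ∑' r, g r := tsum_mul_left

/-- single-coordinate case of the differential privacy of the noisy
median. If `h' = h` except `h'_j = h_j + 1`, then for every `j*` the probabilities
of the noisy median being `j*` under `h` and `h'` differ by a factor at most `e^{ε/2}`. -/
theorem stmt12 {q : ℕ} (ε : ℝ) (hε : 0 < ε)
    (h h' : Fin (q + 1) → ℕ) (j : Fin (q + 1))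
    (hdiff : h' = Function.update h j (h j + 1)) (jstar : Fin (q + 1)) :
    (∑' r : Fin (q + 1) → ℕ,
        if Med (fun k => h k + r k) = jstar then noisePMF ε r else 0)
      ≤ Real.exp (ε / 2) *
        (∑' r : Fin (q + 1) → ℕ,
          if Med (fun k => h' k + r k) = jstar then noisePMF ε r else 0) ∧
    (∑' r : Fin (q + 1) → ℕ,
        if Med (fun k => h' k + r k) = jstar then noisePMF ε r else 0)
      ≤ Real.exp (ε / 2) *
        (∑' r : Fin (q + 1) → ℕ,
          if Med (fun k => h k + r k) = jstar then noisePMF ε r else 0) := by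
  subst hdiff
  constructor
  · exact key_ineq hε h (Function.update h j (h j + 1)) jstar
      (fun r H => med1 h r j jstar H)
  · exact key_ineq hε (Function.update h j (h j + 1)) h jstar
      (fun r H => med2 h r j jstar H)
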